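/- Let K ⊆ ℝ^d be a centrally-symmetric convex set with K°_ℤ = {0}. Then the reduction map ℤ^d → (ℤ/3ℤ)^d is injective on K_ℤ. -/

import Mathlib

open Set

noncomputable section

/-- Coordinatewise cast of an integer vector into `ℝ^d`. -/
def ic {d : ℕ} (v : Fin d → ℤ) : Fin d → ℝ := fun i => (v i : ℝ)

/-- `K_ℤ`: the set of lattice points of `ℤ^d` lying in `K`. -/
def latticePts {d : ℕ} (K : Set (Fin d → ℝ)) : Set (Fin d → ℤ) := {x | ic x ∈ K}

/-- `K°_ℤ`: the set of lattice points of `ℤ^d` lying in the relative interior of `K`. -/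
def relintLatticePts {d : ℕ} (K : Set (Fin d → ℝ)) : Set (Fin d → ℤ) :=
  {x | ic x ∈ intrinsicInterior ℝ K}

/-- Key geometric lemma: if `0` is in the intrinsic interior of a convex set `K` and
`3 • z ∈ K` follows-style: if `z ∈ K` is such that `3 • (· - z)` maps into `K` ... we prove:
if `0 ∈ intrinsicInterior ℝ K`, `w ∈ K`, then `(2/3) • w ∈ intrinsicInterior ℝ K`. -/
theorem twothirds_mem_intrinsicInterior {d : ℕ} {K : Set (Fin d → ℝ)}
    (hconv : Convex ℝ K) (h0 : (0 : Fin d → ℝ) ∈ intrinsicInterior ℝ K)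
    {w : Fin d → ℝ} (hw : w ∈ K) :
    (2/3 : ℝ) • w ∈ intrinsicInterior ℝ K := by
  set S := affineSpan ℝ K with hSdef
  obtain ⟨o, ho, ho0⟩ := mem_intrinsicInterior.1 h0
  set z : Fin d → ℝ := (2/3 : ℝ) • w with hzdef
  have h0S : (0 : Fin d → ℝ) ∈ affineSpan ℝ K := by
    rw [← ho0]; exact o.2
  have hzK : z ∈ K := by
    have := hconv hw (intrinsicInterior_subset h0) (by norm_num : (0:ℝ) ≤ 2/3)
      (by norm_num : (0:ℝ) ≤ 1/3) (by norm_num)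
    simpa using this
  have hzS : z ∈ S := subset_affineSpan ℝ K hzK
  -- the map p ↦ 3 • (p - z) on S
  have hmap : ∀ p : S, (3:ℝ) • ((p:Fin d → ℝ) - z) ∈ S := by
    intro p
    have hd : (p:Fin d → ℝ) - z ∈ S.direction := by
      have := AffineSubspace.vsub_mem_direction p.2 hzS
      simpa [vsub_eq_sub] using this
    have hd3 : (3:ℝ) • ((p:Fin d → ℝ) - z) ∈ S.direction := Submodule.smul_mem _ _ hd
    have := AffineSubspace.vadd_mem_of_mem_direction hd3 h0S
    simpa [vadd_eq_add] using this
  let f : S → S := fun p => ⟨(3:ℝ) • ((p:Fin d → ℝ) - z), hmap p⟩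
  have hf : Continuous f := by
    apply Continuous.subtype_mk
    exact Continuous.smul (f := fun _ : S => (3:ℝ)) (g := fun p : S => (p:Fin d → ℝ) - z)
      continuous_const (Continuous.sub (f := fun p : S => (p : Fin d → ℝ)) (g := fun _ : S => z)
        continuous_subtype_val continuous_const)
  have hfz : f ⟨z, hzS⟩ = o := by
    apply Subtype.ext
    simp [f, ho0.symm]
    simp [ho0]
  -- preimage of the interior neighborhood
  have hopen : IsOpen (f ⁻¹' interior ((↑) ⁻¹' K : Set S)) := isOpen_interior.preimage hf
  have hzmem : (⟨z, hzS⟩ : S) ∈ f ⁻¹' interior ((↑) ⁻¹' K : Set S) := by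
    simp only [Set.mem_preimage, hfz]; exact ho
  have hsub : f ⁻¹' interior ((↑) ⁻¹' K : Set S) ⊆ ((↑) ⁻¹' K : Set S) := by
    intro p hp
    have huK : f p ∈ ((↑) ⁻¹' K : Set S) := interior_subset hp
    have hu : (3:ℝ) • ((p:Fin d → ℝ) - z) ∈ K := huK
    have hcomb := hconv hw hu (by norm_num : (0:ℝ) ≤ 2/3) (by norm_num : (0:ℝ) ≤ 1/3)
      (by norm_num)
    have : (2/3 : ℝ) • w + (1/3 : ℝ) • ((3:ℝ) • ((p:Fin d → ℝ) - z)) = (p : Fin d → ℝ) := by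
      rw [smul_smul]
      norm_num [hzdef]
    rwa [this] at hcomb
  have : (⟨z, hzS⟩ : S) ∈ interior ((↑) ⁻¹' K : Set S) :=
    interior_maximal hsub hopen hzmem
  exact mem_intrinsicInterior.2 ⟨⟨z, hzS⟩, this, rfl⟩

theorem mod_three_injOn_latticePts {d : ℕ} (K : Set (Fin d → ℝ))
    (hconv : Convex ℝ K) (hsym : K = -K)
    (hint : relintLatticePts K = {0}) :
    Set.InjOn (fun x : Fin d → ℤ => fun i => ((x i : ZMod 3))) (latticePts K) := by
  intro x hx y hy hxy
  -- 0 is in the intrinsic interior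
  have h0 : (0 : Fin d → ℤ) ∈ relintLatticePts K := by rw [hint]; rfl
  have h0' : ic (0 : Fin d → ℤ) ∈ intrinsicInterior ℝ K := h0
  have hic0 : ic (0 : Fin d → ℤ) = (0 : Fin d → ℝ) := by
    funext i; simp [ic]
  rw [hic0] at h0'
  -- divisibility
  have hdvd : ∀ i, x i - y i = 3 * ((x i - y i) / 3) := by
    intro i
    have h1 : ((x i : ZMod 3)) = ((y i : ZMod 3)) := congrFun hxy i
    have h2 : (3:ℤ) ∣ x i - y i := by
      have := (ZMod.intCast_eq_intCast_iff' (x i) (y i) 3).1 h1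
      exact Int.ModEq.dvd this.symm
    exact (Int.mul_ediv_cancel' h2).symm
  set v : Fin d → ℤ := fun i => (x i - y i) / 3 with hv
  have h3v : (3:ℝ) • ic v = ic x - ic y := by
    funext i
    have : ((3 * ((x i - y i) / 3) : ℤ) : ℝ) = ((x i : ℤ) : ℝ) - ((y i : ℤ) : ℝ) := by
      rw [← hdvd i]; push_cast; ring
    simpa [ic, Pi.smul_apply, Pi.sub_apply, hv] using this
  -- -ic y ∈ K
  have hny : -ic y ∈ K := by
    rw [hsym, Set.mem_neg, neg_neg]; exact hy
  -- midpoint w ∈ K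
  have hwK : (1/2 : ℝ) • ic x + (1/2 : ℝ) • (-ic y) ∈ K :=
    hconv hx hny (by norm_num) (by norm_num) (by norm_num)
  have hzw : ic v = (2/3 : ℝ) • ((1/2 : ℝ) • ic x + (1/2 : ℝ) • (-ic y)) := by
    have h13 : ic v = (1/3 : ℝ) • (ic x - ic y) := by
      rw [← h3v, smul_smul]; norm_num
    rw [h13]
    rw [smul_add, smul_smul, smul_smul]
    norm_num
    module
  have hzint : ic v ∈ intrinsicInterior ℝ K := by
    rw [hzw]
    exact twothirds_mem_intrinsicInterior hconv h0' hwK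
  have hv0 : v = 0 := by
    have : v ∈ relintLatticePts K := hzint
    rw [hint] at this
    exact this
  funext i
  have hvi : (x i - y i) / 3 = 0 := by simpa [hv] using congrFun hv0 i
  have hd := hdvd i
  omega
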